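/- Let F = f + g with f convex differentiable with L-Lipschitz gradient and g proper closed convex, and suppose F attains its minimum F* at x*. The accelerated proximal gradient method (with stepsize 1/L, momentum coefficients t_k satisfying t₀ = 1, t_k = (1 + √(1 + 4t_{k−1}²))/2, and extrapolation y_{k+1} = x_k + ((t_{k−1} − 1)/t_k)(x_k − x_{k−1})) produces iterates satisfying F(x_k) − F* ≤ 2L‖x₀ − x*‖²/(k+1)² for all k ≥ 1. -/

import Mathlib

open RealInnerProductSpace

section FistaAux

variable {E : Type*} [NormedAddCommGroup E] [InnerProductSpace ℝ E] [CompleteSpace E]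

/-- derivative along a line -/
private lemma fista_line_hasDerivAt (f : E → ℝ) (f' : E → E)
    (hf : ∀ x, HasGradientAt f (f' x) x) (a v : E) (s : ℝ) :
    HasDerivAt (fun r : ℝ => f (a + r • v)) ⟪f' (a + s • v), v⟫ s := by
  have hc : HasDerivAt (fun r : ℝ => a + r • v) v s := by
    simpa using ((hasDerivAt_id s).smul_const v).const_add a
  have hg := (hf (a + s • v)).hasFDerivAt
  have := hg.comp_hasDerivAt s hc
  exact this

/-- gradient inequality for convex functions -/
private lemma fista_convex_grad_ineq (f : E → ℝ) (f' : E → E)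
    (hf : ∀ x, HasGradientAt f (f' x) x)
    (hfconv : ConvexOn ℝ Set.univ f) (a b : E) :
    f a + ⟪f' a, b - a⟫ ≤ f b := by
  have hslope : ∀ t : ℝ, t ∈ Set.Ioc (0:ℝ) 1 →
      (f (a + t • (b - a)) - f a) / t ≤ f b - f a := by
    intro t ht
    have h := hfconv.2 (Set.mem_univ a) (Set.mem_univ b)
      (by linarith [ht.1, ht.2] : (0:ℝ) ≤ 1 - t) (le_of_lt ht.1) (by ring)
    have he : (1 - t) • a + t • b = a + t • (b - a) := by
      simp [smul_sub, sub_smul]; abel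
    rw [he] at h
    rw [div_le_iff₀ ht.1]
    simp only [smul_eq_mul] at h
    nlinarith [h]
  have hd : HasDerivAt (fun r : ℝ => f (a + r • (b - a))) ⟪f' a, b - a⟫ 0 := by
    simpa using fista_line_hasDerivAt f f' hf a (b - a) 0
  have htt : Filter.Tendsto (slope (fun r : ℝ => f (a + r • (b - a))) 0)
      (nhdsWithin 0 (Set.Ioi 0)) (nhds ⟪f' a, b - a⟫) :=
    (hasDerivAt_iff_tendsto_slope.1 hd).mono_left
      (nhdsWithin_mono 0 (fun x hx => ne_of_gt hx))
  have hle : ⟪f' a, b - a⟫ ≤ f b - f a := by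
    refine le_of_tendsto htt ?_
    filter_upwards [Ioc_mem_nhdsGT_of_mem (Set.mem_Ico.2 ⟨le_refl (0:ℝ), one_pos⟩)] with t ht
    have := hslope t ht
    rw [div_eq_inv_mul] at this
    simpa [slope_def_field, slope, vsub_eq_sub] using this
  linarith

/-- descent lemma -/
private lemma fista_descent_lemma (f : E → ℝ) (f' : E → E)
    (hf : ∀ x, HasGradientAt f (f' x) x)
    (L : ℝ) (hlip : ∀ x y, ‖f' x - f' y‖ ≤ L * ‖x - y‖) (a b : E) :
    f b ≤ f a + ⟪f' a, b - a⟫ + L / 2 * ‖b - a‖ ^ 2 := by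
  set v := b - a with hv
  set ψ : ℝ → ℝ := fun t => f (a + t • v) - t * ⟪f' a, v⟫ - L / 2 * t ^ 2 * ‖v‖ ^ 2 with hψ
  have hdψ : ∀ t : ℝ, HasDerivAt ψ (⟪f' (a + t • v), v⟫ - ⟪f' a, v⟫ - L * t * ‖v‖ ^ 2) t := by
    intro t
    have h1 := fista_line_hasDerivAt f f' hf a v t
    have h2 : HasDerivAt (fun t : ℝ => t * ⟪f' a, v⟫) ⟪f' a, v⟫ t := by
      simpa using (hasDerivAt_id t).mul_const ⟪f' a, v⟫
    have h3 : HasDerivAt (fun t : ℝ => L / 2 * t ^ 2 * ‖v‖ ^ 2) (L * t * ‖v‖ ^ 2) t := by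
      have := ((hasDerivAt_pow 2 t).const_mul (L / 2)).mul_const (‖v‖ ^ 2)
      refine this.congr_deriv ?_
      ring
    exact (h1.sub h2).sub h3
  have hmono : ψ 1 ≤ ψ 0 := by
    have hanti : AntitoneOn ψ (Set.Icc 0 1) := by
      apply antitoneOn_of_deriv_nonpos (convex_Icc 0 1)
      · exact Continuous.continuousOn
          (continuous_iff_continuousAt.2 (fun t => (hdψ t).continuousAt))
      · intro t _
        exact (hdψ t).differentiableAt.differentiableWithinAt
      · intro t ht
        rw [interior_Icc] at ht
        rw [(hdψ t).deriv]
        have hcs : ⟪f' (a + t • v) - f' a, v⟫ ≤ ‖f' (a + t • v) - f' a‖ * ‖v‖ :=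
          real_inner_le_norm _ _
        have hl : ‖f' (a + t • v) - f' a‖ ≤ L * ‖t • v‖ := by
          have := hlip (a + t • v) a
          simpa using this
        rw [norm_smul] at hl
        have ht0 : 0 < t := ht.1
        rw [inner_sub_left] at hcs
        have : ‖f' (a + t • v) - f' a‖ * ‖v‖ ≤ L * t * ‖v‖ ^ 2 := by
          rw [Real.norm_eq_abs, abs_of_pos ht0] at hl
          nlinarith [norm_nonneg v, norm_nonneg (f' (a + t • v) - f' a)]
        linarith
    exact hanti (Set.mem_Icc.2 ⟨le_refl 0, zero_le_one⟩)
      (Set.mem_Icc.2 ⟨zero_le_one, le_refl 1⟩) zero_le_one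
  have h0 : ψ 0 = f a := by simp [hψ]
  have h1 : ψ 1 = f b - ⟪f' a, v⟫ - L / 2 * ‖v‖ ^ 2 := by
    have : a + v = b := by simp [hv]
    simp [hψ, this]
  rw [h0, h1] at hmono
  linarith

private lemma fista_id2 (x y z : E) :
    ‖x - y‖ ^ 2 + 2 * ⟪x - y, z - x⟫ + ‖z - x‖ ^ 2 = ‖z - y‖ ^ 2 := by
  have h := norm_add_sq_real (x - y) (z - x)
  rw [show x - y + (z - x) = z - y by abel] at h
  linarith

private lemma fista_norm_combo_id (s : ℝ) (p a b : E) :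
    s * (s - 1) * ‖a - p‖ ^ 2 + s * ‖b - p‖ ^ 2 =
      ‖s • p - (s - 1) • a - b‖ ^ 2 +
        (s * (s - 1) * ‖a‖ ^ 2 + s * ‖b‖ ^ 2 - ‖(s - 1) • a + b‖ ^ 2) := by
  simp only [← real_inner_self_eq_norm_sq, inner_sub_left, inner_sub_right, inner_add_left,
    inner_add_right, inner_smul_left, inner_smul_right, RCLike.ofReal_real_eq_id, id_eq,
    conj_trivial]
  ring_nf

end FistaAux

set_option maxHeartbeats 1000000 in
/-- FISTA `O(1/k²)` convergence: with `F = f + g`, `f` convex with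
`L`-Lipschitz gradient, `g` proper closed convex, minimizer `x*`, stepsize
`1/L`, momentum coefficients `t₀ = 1`, `t_k = (1 + √(1 + 4t_{k-1}²))/2`, and
extrapolation `y_{k+1} = x_k + ((t_{k-1} - 1)/t_k)(x_k - x_{k-1})`, the
iterates satisfy `F(x_k) - F* ≤ 2L‖x₀ - x*‖²/(k+1)²` for all `k ≥ 1`. -/
theorem fista_convergence {n : ℕ}
    (f : EuclideanSpace ℝ (Fin n) → ℝ) (f' : EuclideanSpace ℝ (Fin n) → EuclideanSpace ℝ (Fin n))
    (hf : ∀ x, HasGradientAt f (f' x) x)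
    (hfconv : ConvexOn ℝ Set.univ f)
    (L : ℝ) (hL : 0 < L)
    (hlip : ∀ x y, ‖f' x - f' y‖ ≤ L * ‖x - y‖)
    (g : EuclideanSpace ℝ (Fin n) → EReal)
    -- `g` is proper:
    (hg_ne_top : ∃ x, g x ≠ ⊤) (hg_ne_bot : ∀ x, g x ≠ ⊥)
    -- `g` is closed:
    (hg_lsc : LowerSemicontinuous g)
    -- `g` is convex:
    (hg_conv : ∀ x y, ∀ a b : ℝ, 0 ≤ a → 0 ≤ b → a + b = 1 →
      g (a • x + b • y) ≤ (a : EReal) * g x + (b : EReal) * g y)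
    -- `F = f + g` attains its minimum at `xstar`
    (xstar : EuclideanSpace ℝ (Fin n))
    (hstar : ∀ x, (f xstar : EReal) + g xstar ≤ (f x : EReal) + g x)
    -- momentum coefficients
    (t : ℕ → ℝ) (ht0 : t 0 = 1)
    (htrec : ∀ k : ℕ, 1 ≤ k → t k = (1 + Real.sqrt (1 + 4 * t (k - 1) ^ 2)) / 2)
    -- iterates
    (x y : ℕ → EuclideanSpace ℝ (Fin n))
    (hy1 : y 1 = x 0)
    -- proximal gradient step with stepsize `1/L`:
    -- `x_k = argmin_x ⟨∇f(y_k), x - y_k⟩ + (L/2)‖x - y_k‖² + g(x)`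
    (hprox : ∀ k : ℕ, 1 ≤ k → ∀ z,
      ((⟪f' (y k), x k - y k⟫ + L / 2 * ‖x k - y k‖ ^ 2 : ℝ) : EReal) + g (x k) ≤
        ((⟪f' (y k), z - y k⟫ + L / 2 * ‖z - y k‖ ^ 2 : ℝ) : EReal) + g z)
    -- extrapolation step
    (hextra : ∀ k : ℕ, 1 ≤ k →
      y (k + 1) = x k + ((t (k - 1) - 1) / t k) • (x k - x (k - 1))) :
    ∀ k : ℕ, 1 ≤ k →
      (f (x k) : EReal) + g (x k) ≤
        ((f xstar : EReal) + g xstar) +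
          ((2 * L * ‖x 0 - xstar‖ ^ 2 / ((k : ℝ) + 1) ^ 2 : ℝ) : EReal) := by
  classical
  have hLne : L ≠ 0 := ne_of_gt hL
  obtain ⟨z₀, hz₀⟩ := hg_ne_top
  have hz₀R : g z₀ = ((g z₀).toReal : EReal) := (EReal.coe_toReal hz₀ (hg_ne_bot z₀)).symm
  -- g (x k) is real for k ≥ 1
  have hgx_ne_top : ∀ k : ℕ, 1 ≤ k → g (x k) ≠ ⊤ := by
    intro k hk htop
    have h := hprox k hk z₀
    rw [htop, EReal.coe_add_top, hz₀R, ← EReal.coe_add] at h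
    exact EReal.coe_ne_top _ (top_le_iff.1 h)
  set G : ℕ → ℝ := fun k => (g (x k)).toReal with hGdef
  have hG : ∀ k : ℕ, 1 ≤ k → g (x k) = ((G k : ℝ) : EReal) := by
    intro k hk
    exact (EReal.coe_toReal (hgx_ne_top k hk) (hg_ne_bot (x k))).symm
  -- g xstar is real
  have hgs_ne_top : g xstar ≠ ⊤ := by
    intro htop
    have h := hstar (x 1)
    rw [htop, EReal.coe_add_top, hG 1 le_rfl, ← EReal.coe_add] at h
    exact EReal.coe_ne_top _ (top_le_iff.1 h)
  set gs : ℝ := (g xstar).toReal with hgsdef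
  have hgs : g xstar = ((gs : ℝ) : EReal) := (EReal.coe_toReal hgs_ne_top (hg_ne_bot xstar)).symm
  set Fs : ℝ := f xstar + gs with hFsdef
  -- real prox inequality
  have hproxR : ∀ k : ℕ, 1 ≤ k → ∀ z : EuclideanSpace ℝ (Fin n), ∀ r : ℝ, g z = ((r : ℝ) : EReal) →
      ⟪f' (y k), x k - y k⟫ + L / 2 * ‖x k - y k‖ ^ 2 + G k ≤
        ⟪f' (y k), z - y k⟫ + L / 2 * ‖z - y k‖ ^ 2 + r := by
    intro k hk z r hz
    have h := hprox k hk z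
    rw [hG k hk, hz, ← EReal.coe_add, ← EReal.coe_add, EReal.coe_le_coe_iff] at h
    exact h
  -- real lower bound from the minimizer
  have hstarR : ∀ k : ℕ, 1 ≤ k → Fs ≤ f (x k) + G k := by
    intro k hk
    have h := hstar (x k)
    rw [hG k hk, hgs, ← EReal.coe_add, ← EReal.coe_add, EReal.coe_le_coe_iff] at h
    exact h
  -- strong subgradient inequality from prox optimality
  have hsub : ∀ k : ℕ, 1 ≤ k → ∀ z : EuclideanSpace ℝ (Fin n), ∀ r : ℝ, g z = ((r : ℝ) : EReal) →
      G k ≤ r + ⟪f' (y k), z - x k⟫ + L * ⟪x k - y k, z - x k⟫ := by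
    intro k hk z r hz
    set A : ℝ := ⟪f' (y k), z - x k⟫ + L * ⟪x k - y k, z - x k⟫ with hAdef
    have key : ∀ lam : ℝ, lam ∈ Set.Ioc (0:ℝ) 1 →
        G k ≤ r + A + L / 2 * lam * ‖z - x k‖ ^ 2 := by
      intro lam hlam
      set w : EuclideanSpace ℝ (Fin n) := x k + lam • (z - x k) with hwdef
      -- convexity bound for g w
      have hconv := hg_conv (x k) z (1 - lam) lam (by linarith [hlam.1, hlam.2])
        (le_of_lt hlam.1) (by ring)
      have hcomb : (1 - lam) • x k + lam • z = w := by
        rw [hwdef]; simp [smul_sub, sub_smul]; abel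
      rw [hcomb, hG k hk, hz, ← EReal.coe_mul, ← EReal.coe_mul, ← EReal.coe_add] at hconv
      have hw_ne_top : g w ≠ ⊤ := ne_top_of_le_ne_top (EReal.coe_ne_top _) hconv
      have hwR : g w = (((g w).toReal : ℝ) : EReal) :=
        (EReal.coe_toReal hw_ne_top (hg_ne_bot w)).symm
      set gw : ℝ := (g w).toReal with hgwdef
      rw [hwR, EReal.coe_le_coe_iff] at hconv
      -- prox inequality at w
      have hp := hproxR k hk w gw hwR
      -- expand the quadratic at w
      have hwy : w - y k = (x k - y k) + lam • (z - x k) := by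
        rw [hwdef]; abel
      have hinner : ⟪f' (y k), w - y k⟫ =
          ⟪f' (y k), x k - y k⟫ + lam * ⟪f' (y k), z - x k⟫ := by
        rw [hwy, inner_add_right, real_inner_smul_right]
      have hnorm : ‖w - y k‖ ^ 2 = ‖x k - y k‖ ^ 2 +
          2 * lam * ⟪x k - y k, z - x k⟫ + lam ^ 2 * ‖z - x k‖ ^ 2 := by
        rw [hwy, norm_add_sq_real, real_inner_smul_right, norm_smul, Real.norm_eq_abs,
          abs_of_pos hlam.1, mul_pow]
        ring
      rw [hinner, hnorm] at hp
      have hlam0 := hlam.1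
      have : lam * G k ≤ lam * (r + A + L / 2 * lam * ‖z - x k‖ ^ 2) := by
        rw [hAdef]
        nlinarith [hp, hconv]
      exact le_of_mul_le_mul_left (by linarith [this]) hlam0
    -- take lam → 0
    by_contra hcon
    push_neg at hcon
    set c : ℝ := L / 2 * ‖z - x k‖ ^ 2 with hcdef
    have hc0 : 0 ≤ c := by positivity
    set eps : ℝ := G k - (r + A) with hepsdef
    have heps : 0 < eps := by rw [hepsdef]; linarith [hcon]
    set lam : ℝ := min 1 (eps / (2 * (c + 1))) with hlamdef
    have hlam_pos : 0 < lam := lt_min one_pos (by positivity)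
    have hlam_le1 : lam ≤ 1 := min_le_left _ _
    have h := key lam ⟨hlam_pos, hlam_le1⟩
    have hlam_le : lam ≤ eps / (2 * (c + 1)) := min_le_right _ _
    have h2 : lam * (2 * (c + 1)) ≤ eps :=
      (le_div_iff₀ (by positivity : (0:ℝ) < 2 * (c + 1))).1 hlam_le
    have : c * lam ≤ eps / 2 := by nlinarith [h2, hlam_pos.le]
    have hck : L / 2 * lam * ‖z - x k‖ ^ 2 = c * lam := by rw [hcdef]; ring
    rw [hck] at h
    rw [hepsdef] at heps this
    linarith
  -- key inequality (Beck–Teboulle Lemma 2.3)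
  have hKI : ∀ k : ℕ, 1 ≤ k → ∀ z : EuclideanSpace ℝ (Fin n), ∀ r : ℝ, g z = ((r : ℝ) : EReal) →
      f (x k) + G k ≤ f z + r + L / 2 * (‖z - y k‖ ^ 2 - ‖z - x k‖ ^ 2) := by
    intro k hk z r hz
    have hdesc := fista_descent_lemma f f' hf L hlip (y k) (x k)
    have hconv := fista_convex_grad_ineq f f' hf hfconv (y k) z
    have hs := hsub k hk z r hz
    have hcancel : ⟪f' (y k), x k - y k⟫ - ⟪f' (y k), z - y k⟫ + ⟪f' (y k), z - x k⟫
        = 0 := by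
      rw [← inner_sub_right, ← inner_add_right]
      rw [show x k - y k - (z - y k) + (z - x k) = 0 by abel]
      exact inner_zero_right _
    have hid := fista_id2 (x k) (y k) z
    have hid2 : L / 2 * ‖x k - y k‖ ^ 2 + L * ⟪x k - y k, z - x k⟫ =
        L / 2 * (‖z - y k‖ ^ 2 - ‖z - x k‖ ^ 2) := by linear_combination (L / 2) * hid
    linarith

  -- properties of the momentum coefficients
  have ht_ge : ∀ k : ℕ, ((k : ℝ) + 2) / 2 ≤ t k := by
    intro k
    induction k with
    | zero => simp [ht0]
    | succ m ih =>
      have hrec := htrec (m + 1) (by omega)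
      simp only [Nat.add_sub_cancel] at hrec
      have htm0 : 0 ≤ t m := by
        have : (0:ℝ) ≤ ((m : ℝ) + 2) / 2 := by positivity
        linarith
      have hsq : 2 * t m ≤ Real.sqrt (1 + 4 * t m ^ 2) := by
        rw [show (1:ℝ) + 4 * t m ^ 2 = (2 * t m) ^ 2 + 1 by ring]
        refine le_trans ?_ (Real.sqrt_le_sqrt (by linarith : (2 * t m) ^ 2 ≤ (2 * t m) ^ 2 + 1))
        rw [Real.sqrt_sq (by linarith)]
      rw [hrec]
      push_cast
      linarith [ih, hsq]
  have ht1 : ∀ k : ℕ, 1 ≤ t k := by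
    intro k
    have := ht_ge k
    have : (1:ℝ) ≤ ((k : ℝ) + 2) / 2 := by
      have : (0:ℝ) ≤ (k : ℝ) := Nat.cast_nonneg k
      linarith
    linarith [ht_ge k]
  have htsq : ∀ m : ℕ, t (m + 1) ^ 2 - t (m + 1) = t m ^ 2 := by
    intro m
    have hrec := htrec (m + 1) (by omega)
    simp only [Nat.add_sub_cancel] at hrec
    have harg : (0:ℝ) ≤ 1 + 4 * t m ^ 2 := by positivity
    have hR : Real.sqrt (1 + 4 * t m ^ 2) ^ 2 = 1 + 4 * t m ^ 2 := Real.sq_sqrt harg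
    rw [hrec]
    linear_combination (1 / 4 : ℝ) * hR
  -- the Lyapunov sequence
  set D : ℕ → ℝ := fun m =>
    2 / L * t m ^ 2 * (f (x (m + 1)) + G (m + 1) - Fs) +
      ‖t m • x (m + 1) - (t m - 1) • x m - xstar‖ ^ 2 with hDdef
  have hD0 : D 0 ≤ ‖x 0 - xstar‖ ^ 2 := by
    have hki := hKI 1 le_rfl xstar gs hgs
    rw [hy1] at hki
    have h2 : 2 / L * (f (x 1) + G 1 - Fs) ≤
        ‖xstar - x 0‖ ^ 2 - ‖xstar - x 1‖ ^ 2 := by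
      have hmul := mul_le_mul_of_nonneg_left
        (by linarith [hki] : f (x 1) + G 1 - Fs ≤
          L / 2 * (‖xstar - x 0‖ ^ 2 - ‖xstar - x 1‖ ^ 2))
        (by positivity : (0:ℝ) ≤ 2 / L)
      calc 2 / L * (f (x 1) + G 1 - Fs) ≤
          2 / L * (L / 2 * (‖xstar - x 0‖ ^ 2 - ‖xstar - x 1‖ ^ 2)) := hmul
        _ = ‖xstar - x 0‖ ^ 2 - ‖xstar - x 1‖ ^ 2 := by field_simp
    have hDval : D 0 = 2 / L * (f (x 1) + G 1 - Fs) + ‖x 1 - xstar‖ ^ 2 := by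
      rw [hDdef]
      simp [ht0]
    rw [norm_sub_rev xstar (x 0), norm_sub_rev xstar (x 1)] at h2
    rw [hDval]
    linarith [h2]
  have hDstep : ∀ m : ℕ, D (m + 1) ≤ D m := by
    intro m
    set s : ℝ := t (m + 1) with hsdef
    have hs1 : 1 ≤ s := ht1 (m + 1)
    have hs0 : s ≠ 0 := by linarith
    have hsq : s ^ 2 - s = t m ^ 2 := htsq m
    -- extrapolation identity
    have hex := hextra (m + 1) (by omega)
    simp only [Nat.add_sub_cancel] at hex
    have hyid : s • y (m + 2) - (s - 1) • x (m + 1) - xstar =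
        t m • x (m + 1) - (t m - 1) • x m - xstar := by
      have h1 : s • y (m + 2) = s • x (m + 1) + (t m - 1) • (x (m + 1) - x m) := by
        rw [show m + 1 + 1 = m + 2 from rfl] at hex
        rw [hex, smul_add, smul_smul, mul_div_cancel₀ _ hs0]
      rw [h1]
      module
    -- the two key inequalities at step m+2
    have hkA := hKI (m + 2) (by omega) (x (m + 1)) (G (m + 1)) (hG (m + 1) (by omega))
    have hkB := hKI (m + 2) (by omega) xstar gs hgs
    set v1 : ℝ := f (x (m + 1)) + G (m + 1) - Fs with hv1def
    set v2 : ℝ := f (x (m + 2)) + G (m + 2) - Fs with hv2def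
    have hA : v2 ≤ v1 + L / 2 * (‖x (m + 1) - y (m + 2)‖ ^ 2 - ‖x (m + 1) - x (m + 2)‖ ^ 2) := by
      rw [hv1def, hv2def, hFsdef]
      linarith [hkA]
    have hB : v2 ≤ L / 2 * (‖xstar - y (m + 2)‖ ^ 2 - ‖xstar - x (m + 2)‖ ^ 2) := by
      rw [hv2def, hFsdef]
      linarith [hkB]
    -- combine with weights s(s-1) and s
    have hss : 0 ≤ s * (s - 1) := by nlinarith
    have hcomb : s ^ 2 * v2 - (s ^ 2 - s) * v1 ≤
        L / 2 * ((s * (s - 1) * ‖x (m + 1) - y (m + 2)‖ ^ 2 + s * ‖xstar - y (m + 2)‖ ^ 2) -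
          (s * (s - 1) * ‖x (m + 1) - x (m + 2)‖ ^ 2 + s * ‖xstar - x (m + 2)‖ ^ 2)) := by
      have h1 := mul_le_mul_of_nonneg_left hA hss
      have h2 := mul_le_mul_of_nonneg_left hB (by linarith : (0:ℝ) ≤ s)
      nlinarith [h1, h2]
    have hid1 := fista_norm_combo_id s (y (m + 2)) (x (m + 1)) xstar
    have hid2 := fista_norm_combo_id s (x (m + 2)) (x (m + 1)) xstar
    rw [hyid] at hid1
    have hfin : s ^ 2 * v2 - (s ^ 2 - s) * v1 ≤
        L / 2 * (‖t m • x (m + 1) - (t m - 1) • x m - xstar‖ ^ 2 -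
          ‖s • x (m + 2) - (s - 1) • x (m + 1) - xstar‖ ^ 2) := by
      rw [show L / 2 * (‖t m • x (m + 1) - (t m - 1) • x m - xstar‖ ^ 2 -
          ‖s • x (m + 2) - (s - 1) • x (m + 1) - xstar‖ ^ 2) =
          L / 2 * ((s * (s - 1) * ‖x (m + 1) - y (m + 2)‖ ^ 2 + s * ‖xstar - y (m + 2)‖ ^ 2) -
          (s * (s - 1) * ‖x (m + 1) - x (m + 2)‖ ^ 2 + s * ‖xstar - x (m + 2)‖ ^ 2)) from by
        rw [hid1, hid2]; ring]
      exact hcomb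
    -- translate to D
    have hDm1 : D (m + 1) = 2 / L * s ^ 2 * v2 +
        ‖s • x (m + 2) - (s - 1) • x (m + 1) - xstar‖ ^ 2 := by
      rw [hDdef, hv2def, hFsdef, hsdef]
    have hDm : D m = 2 / L * (s ^ 2 - s) * v1 +
        ‖t m • x (m + 1) - (t m - 1) • x m - xstar‖ ^ 2 := by
      rw [hDdef, hv1def, hFsdef, hsq]
    rw [hDm1, hDm]
    have hmul := mul_le_mul_of_nonneg_left hfin (by positivity : (0:ℝ) ≤ 2 / L)
    have hLne : L ≠ 0 := ne_of_gt hL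
    calc 2 / L * s ^ 2 * v2 + ‖s • x (m + 2) - (s - 1) • x (m + 1) - xstar‖ ^ 2
        ≤ 2 / L * ((s ^ 2 - s) * v1) +
            2 / L * (L / 2 * (‖t m • x (m + 1) - (t m - 1) • x m - xstar‖ ^ 2 -
              ‖s • x (m + 2) - (s - 1) • x (m + 1) - xstar‖ ^ 2)) +
            ‖s • x (m + 2) - (s - 1) • x (m + 1) - xstar‖ ^ 2 := by
          nlinarith [hmul]
      _ = 2 / L * (s ^ 2 - s) * v1 +
            ‖t m • x (m + 1) - (t m - 1) • x m - xstar‖ ^ 2 := by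
          field_simp
          ring
  have hDle : ∀ m : ℕ, D m ≤ ‖x 0 - xstar‖ ^ 2 := by
    intro m
    induction m with
    | zero => exact hD0
    | succ p ih => exact le_trans (hDstep p) ih
  -- conclusion
  intro k hk
  obtain ⟨m, rfl⟩ : ∃ m, k = m + 1 := ⟨k - 1, by omega⟩
  set R2 : ℝ := ‖x 0 - xstar‖ ^ 2 with hR2def
  have hR2nn : 0 ≤ R2 := by positivity
  have hv0 : 0 ≤ f (x (m + 1)) + G (m + 1) - Fs := by linarith [hstarR (m + 1) (by omega)]
  set v : ℝ := f (x (m + 1)) + G (m + 1) - Fs with hvdef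
  have hDm := hDle m
  have hDlb : 2 / L * t m ^ 2 * v ≤ R2 := by
    have hnn : (0:ℝ) ≤ ‖t m • x (m + 1) - (t m - 1) • x m - xstar‖ ^ 2 := by positivity
    rw [hDdef] at hDm
    rw [hvdef]
    linarith [hDm, hnn]
  have htm := ht_ge m
  have htm0 : 0 < t m := by
    have : (0:ℝ) < ((m : ℝ) + 2) / 2 := by positivity
    linarith
  have hvbound : v ≤ 2 * L * R2 / ((m : ℝ) + 2) ^ 2 := by
    rw [le_div_iff₀ (by positivity : (0:ℝ) < ((m : ℝ) + 2) ^ 2)]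
    have h1 : t m ^ 2 * v ≤ L / 2 * R2 := by
      have := mul_le_mul_of_nonneg_left hDlb (by positivity : (0:ℝ) ≤ L / 2)
      calc t m ^ 2 * v = L / 2 * (2 / L * t m ^ 2 * v) := by field_simp
        _ ≤ L / 2 * R2 := this
    have h2 : ((m : ℝ) + 2) ^ 2 * v ≤ 4 * (t m ^ 2 * v) := by
      have h3 : ((m : ℝ) + 2) / 2 * (((m : ℝ) + 2) / 2) ≤ t m * t m :=
        mul_le_mul htm htm (by positivity) htm0.le
      have h4 := mul_le_mul_of_nonneg_right h3 hv0
      nlinarith [h4]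
    nlinarith [h1, h2]
  -- back to EReal
  rw [hG (m + 1) (by omega), hgs, ← EReal.coe_add, ← EReal.coe_add, ← EReal.coe_add,
    EReal.coe_le_coe_iff]
  have hcast : ((((m : ℕ) + 1 : ℕ) : ℝ) + 1) ^ 2 = ((m : ℝ) + 2) ^ 2 := by push_cast; ring
  rw [hcast]
  rw [hvdef, hFsdef] at hvbound
  linarith [hvbound]
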